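/- arXiv:2111.03794 — 2 statements merged into one kernel-verified Lean document; each statement's English description precedes it below -/
import Mathlib

section
/- Symmetrization inequality: the expected uniform deviation of the empirical loss from the expected loss is bounded by twice the Rademacher complexity, i.e. E_{z ∼ μ^{⊗N}}[ sup_{g ∈ ι} ( L(g) − L_N(g)(z) ) ] ≤ 2·C(N). -/
open MeasureTheory

noncomputable section

variable {Z : Type*} [MeasurableSpace Z] {ι : Type*}

/-- The empirical loss of hypothesis `g` on the sample `z` of size `N`:
`L_N(g)(z) = (1/N) ∑ᵢ f g (z i)`. -/
def empLoss (f : ι → Z → ℝ) (N : ℕ) (g : ι) (z : Fin N → Z) : ℝ :=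
  (1 / N) * ∑ i, f g (z i)

/-- The expected loss of hypothesis `g`: `L(g) = ∫ f g dμ`. -/
def expLoss (μ : Measure Z) (f : ι → Z → ℝ) (g : ι) : ℝ :=
  ∫ x, f g x ∂μ

/-- A Rademacher sign `±1` encoded by a Boolean. -/
def rsign (b : Bool) : ℝ := if b then 1 else -1

/-- The fair-coin measure on `Bool`, i.e. the distribution of one Rademacher sign. -/
def coinFlip : Measure Bool := (PMF.uniformOfFintype Bool).toMeasure

/-- The Rademacher complexity of the class `ι` (composed with the loss `f`) with `N` samples:
`C(N) = E_{z ~ μ^N, ξ ~ Unif{±1}^N} [ sup_{g ∈ ι} (1/N) ∑ᵢ ξᵢ f g (zᵢ) ]`. -/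
def radComplexity (μ : Measure Z) (f : ι → Z → ℝ) (N : ℕ) : ℝ :=
  ∫ p : (Fin N → Z) × (Fin N → Bool),
    ⨆ g : ι, (1 / N) * ∑ i, rsign (p.2 i) * f g (p.1 i)
    ∂((Measure.pi fun _ => μ).prod (Measure.pi fun _ => coinFlip))

/-! ### Auxiliary lemmas -/

instance : IsProbabilityMeasure coinFlip := by unfold coinFlip; infer_instance

lemma rsign_abs (b : Bool) : |rsign b| = 1 := by cases b <;> simp [rsign]

lemma rsign_not (b : Bool) : rsign (!b) = -rsign b := by cases b <;> simp [rsign]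

lemma coinFlip_map_not : coinFlip.map Bool.not = coinFlip := by
  ext s hs
  rw [Measure.map_apply (measurable_of_countable _) hs, coinFlip,
    PMF.toMeasure_apply _ (measurable_of_countable Bool.not hs),
    PMF.toMeasure_apply _ hs, tsum_bool, tsum_bool]
  by_cases h1 : true ∈ s <;> by_cases h2 : false ∈ s <;>
    simp [Set.indicator, h1, h2, PMF.uniformOfFintype_apply]

lemma bddAbove_of_abs_le {u : ι → ℝ} {c : ℝ} (h : ∀ g, |u g| ≤ c) :
    BddAbove (Set.range u) :=
  ⟨c, by rintro _ ⟨g, rfl⟩; exact (abs_le.1 (h g)).2⟩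

lemma abs_ciSup_le [Nonempty ι] {u : ι → ℝ} {c : ℝ} (h : ∀ g, |u g| ≤ c) :
    |⨆ g, u g| ≤ c := by
  rw [abs_le]
  refine ⟨?_, ciSup_le fun g => (abs_le.1 (h g)).2⟩
  exact le_trans (abs_le.1 (h (Classical.arbitrary ι))).1
    (le_ciSup (bddAbove_of_abs_le h) _)

lemma integrable_of_abs_le {α : Type*} [MeasurableSpace α] {m : Measure α}
    [IsFiniteMeasure m] {h : α → ℝ} {c : ℝ} (hm : AEStronglyMeasurable h m)
    (hb : ∀ x, |h x| ≤ c) : Integrable h m :=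
  (integrable_const c).mono' hm
    (Filter.Eventually.of_forall (by simpa [Real.norm_eq_abs] using hb))

lemma abs_avg_le {N : ℕ} {t : Fin N → ℝ} (h : ∀ i, |t i| ≤ 1) :
    |(1 / N : ℝ) * ∑ i, t i| ≤ 1 := by
  rcases Nat.eq_zero_or_pos N with rfl | hN
  · simp
  have h1 : |∑ i, t i| ≤ (N : ℝ) := by
    calc |∑ i, t i| ≤ ∑ i, |t i| := Finset.abs_sum_le_sum_abs _ _
    _ ≤ ∑ _i : Fin N, (1 : ℝ) := Finset.sum_le_sum fun i _ => h i
    _ = N := by simp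
  have hN' : (0 : ℝ) < N := by exact_mod_cast hN
  rw [abs_mul, abs_of_pos (by positivity : (0 : ℝ) < 1 / N)]
  calc (1 / N : ℝ) * |∑ i, t i| ≤ (1 / N) * N := by gcongr
  _ = 1 := by field_simp

lemma measurePreserving_piMap {δ : Type*} [Fintype δ] {α β : δ → Type*}
    [∀ i, MeasurableSpace (α i)] [∀ i, MeasurableSpace (β i)]
    {μ : ∀ i, Measure (α i)} {ν : ∀ i, Measure (β i)} [∀ i, SigmaFinite (μ i)]
    [∀ i, SigmaFinite (ν i)]
    {φ : ∀ i, α i → β i} (h : ∀ i, MeasurePreserving (φ i) (μ i) (ν i)) :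
    MeasurePreserving (fun z i => φ i (z i)) (Measure.pi μ) (Measure.pi ν) := by
  have hm : Measurable fun (z : ∀ i, α i) i => φ i (z i) :=
    measurable_pi_lambda _ fun i => (h i).measurable.comp (measurable_pi_apply i)
  refine ⟨hm, (Measure.pi_eq fun s hs => ?_).symm⟩
  rw [Measure.map_apply hm (MeasurableSet.univ_pi hs)]
  have hpre : (fun (z : ∀ i, α i) i => φ i (z i)) ⁻¹' Set.pi Set.univ s
      = Set.pi Set.univ fun i => φ i ⁻¹' s i := by
    ext z; simp [Set.mem_pi]
  rw [hpre, Measure.pi_pi]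
  exact Finset.prod_congr rfl fun i _ => (h i).measure_preimage (hs i).nullMeasurableSet

lemma measurePreserving_eval' {δ : Type*} [Fintype δ] {α : δ → Type*}
    [∀ i, MeasurableSpace (α i)] (μ : ∀ i, Measure (α i))
    [∀ i, IsProbabilityMeasure (μ i)] (i : δ) :
    MeasurePreserving (fun z : ∀ j, α j => z i) (Measure.pi μ) (μ i) := by
  classical
  refine ⟨measurable_pi_apply i, ?_⟩
  ext s hs
  rw [Measure.map_apply (measurable_pi_apply i) hs]
  have hpre : (fun z : ∀ j, α j => z i) ⁻¹' s
      = Set.pi Set.univ (Function.update (fun j => (Set.univ : Set (α j))) i s) := by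
    ext z
    simp only [Set.mem_preimage, Set.mem_pi, Set.mem_univ, forall_true_left]
    constructor
    · intro hz j
      rcases eq_or_ne j i with rfl | hj
      · simpa using hz
      · simp [Function.update_of_ne hj]
    · intro hz; simpa using hz i
  rw [hpre, Measure.pi_pi]
  rw [Finset.prod_eq_single i (fun j _ hj => by simp [Function.update_of_ne hj])
    (by simp)]
  simp

/-- **Symmetrization inequality**: the expected uniform deviation of the empirical loss from
the expected loss is bounded by twice the Rademacher complexity:
`E_{z ~ μ^{⊗N}} [ sup_{g ∈ ι} (L(g) - L_N(g)(z)) ] ≤ 2 C(N)`. -/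
theorem symmetrization
    (μ : Measure Z) [IsProbabilityMeasure μ] [Countable ι] [Nonempty ι]
    (f : ι → Z → ℝ) (hmeas : ∀ g, Measurable (f g))
    (hbound : ∀ g x, f g x ∈ Set.Icc (0 : ℝ) 1)
    (N : ℕ) (hN : 0 < N) :
    (∫ z, (⨆ g : ι, expLoss μ f g - empLoss f N g z)
        ∂(Measure.pi fun _ : Fin N => μ))
      ≤ 2 * radComplexity μ f N := by
  classical
  set ν : Measure (Fin N → Z) := Measure.pi fun _ : Fin N => μ with hνdef
  set B : Measure (Fin N → Bool) := Measure.pi fun _ : Fin N => coinFlip with hBdef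
  have hNR : (N : ℝ) ≠ 0 := Nat.cast_ne_zero.2 hN.ne'
  -- basic bounds
  have hf1 : ∀ g x, |f g x| ≤ 1 := fun g x =>
    abs_le.2 ⟨by linarith [(hbound g x).1], (hbound g x).2⟩
  have hEmp_meas : ∀ g, Measurable (empLoss f N g) := fun g =>
    (Finset.measurable_sum _ fun i _ => (hmeas g).comp (measurable_pi_apply i)).const_mul _
  have hEmp_bd : ∀ g z, |empLoss f N g z| ≤ 1 := fun g z =>
    abs_avg_le fun i => hf1 g (z i)
  have hfint : ∀ g, Integrable (f g) μ :=
    fun g => integrable_of_abs_le (hmeas g).aestronglyMeasurable (hf1 g)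
  have hExp_bd : ∀ g, |expLoss μ f g| ≤ 1 := by
    intro g
    rw [abs_le]
    constructor
    · have : (0 : ℝ) ≤ ∫ x, f g x ∂μ := integral_nonneg fun x => (hbound g x).1
      rw [expLoss]; linarith
    · rw [expLoss]
      calc ∫ x, f g x ∂μ ≤ ∫ _x, (1 : ℝ) ∂μ :=
            integral_mono (hfint g) (integrable_const 1) fun x => (hbound g x).2
      _ = 1 := by simp
  have hΦterm_bd : ∀ (a b : Fin N → Z) (g : ι),
      |empLoss f N g b - empLoss f N g a| ≤ 2 := by
    intro a b g
    obtain ⟨h1a, h1b⟩ := abs_le.1 (hEmp_bd g a)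
    obtain ⟨h2a, h2b⟩ := abs_le.1 (hEmp_bd g b)
    rw [abs_le]; constructor <;> [linarith; linarith]
  -- the three sup-integrands
  set Φ : (Fin N → Z) × (Fin N → Z) → ℝ :=
    fun zz => ⨆ g, empLoss f N g zz.2 - empLoss f N g zz.1 with hΦdef
  have hΦmeas : Measurable Φ :=
    Measurable.iSup fun g =>
      ((hEmp_meas g).comp measurable_snd).sub ((hEmp_meas g).comp measurable_fst)
  have hΦbd : ∀ zz, |Φ zz| ≤ 2 := fun zz => abs_ciSup_le fun g => hΦterm_bd _ _ g
  have hΦint : Integrable Φ (ν.prod ν) :=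
    integrable_of_abs_le hΦmeas.aestronglyMeasurable hΦbd
  set G : (Fin N → Z) × (Fin N → Bool) → ℝ :=
    fun p => ⨆ g, (1 / N : ℝ) * ∑ i, rsign (p.2 i) * f g (p.1 i) with hGdef
  have hGterm_bd : ∀ (p : (Fin N → Z) × (Fin N → Bool)) (g : ι),
      |(1 / N : ℝ) * ∑ i, rsign (p.2 i) * f g (p.1 i)| ≤ 1 := fun p g =>
    abs_avg_le fun i => by rw [abs_mul, rsign_abs, one_mul]; exact hf1 _ _
  have hGmeas : Measurable G :=
    Measurable.iSup fun g =>
      (Finset.measurable_sum _ fun i _ =>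
        (((measurable_of_countable rsign).comp
            ((measurable_pi_apply i).comp measurable_snd)).mul
          ((hmeas g).comp ((measurable_pi_apply i).comp measurable_fst)))).const_mul _
  have hGbd : ∀ p, |G p| ≤ 1 := fun p => abs_ciSup_le (hGterm_bd p)
  set H : (Fin N → Bool) × ((Fin N → Z) × (Fin N → Z)) → ℝ :=
    fun q => ⨆ g, (1 / N : ℝ) * ∑ i, rsign (q.1 i) * (f g (q.2.2 i) - f g (q.2.1 i))
    with hHdef
  have hHterm_bd : ∀ (q : (Fin N → Bool) × ((Fin N → Z) × (Fin N → Z))) (g : ι),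
      |(1 / N : ℝ) * ∑ i, rsign (q.1 i) * (f g (q.2.2 i) - f g (q.2.1 i))| ≤ 1 := by
    intro q g
    refine abs_avg_le fun i => ?_
    rw [abs_mul, rsign_abs, one_mul, abs_le]
    have h1 := hbound g (q.2.2 i)
    have h2 := hbound g (q.2.1 i)
    constructor <;> [linarith [h1.1, h2.2]; linarith [h1.2, h2.1]]
  have hHmeas : Measurable H :=
    Measurable.iSup fun g =>
      (Finset.measurable_sum _ fun i _ =>
        (((measurable_of_countable rsign).comp
            ((measurable_pi_apply i).comp measurable_fst)).mul
          (((hmeas g).comp ((measurable_pi_apply i).comp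
              (measurable_snd.comp measurable_snd))).sub
            ((hmeas g).comp ((measurable_pi_apply i).comp
              (measurable_fst.comp measurable_snd)))))).const_mul _
  have hHbd : ∀ q, |H q| ≤ 1 := fun q => abs_ciSup_le (hHterm_bd q)
  have hHint : Integrable H (B.prod (ν.prod ν)) :=
    integrable_of_abs_le hHmeas.aestronglyMeasurable hHbd
  -- expected empirical loss equals expected loss
  have hemp_int : ∀ g, ∫ z', empLoss f N g z' ∂ν = expLoss μ f g := by
    intro g
    have heval : ∀ i : Fin N, ∫ z' : Fin N → Z, f g (z' i) ∂ν = expLoss μ f g := by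
      intro i
      symm
      rw [expLoss, ← (measurePreserving_eval' (fun _ : Fin N => μ) i).map_eq,
        integral_map (measurable_pi_apply i).aemeasurable
          (hmeas g).aestronglyMeasurable]
    calc ∫ z', empLoss f N g z' ∂ν
        = ∫ z', (1 / N : ℝ) * ∑ i, f g (z' i) ∂ν := rfl
    _ = (1 / N : ℝ) * ∫ z', ∑ i, f g (z' i) ∂ν := integral_const_mul _ _
    _ = (1 / N : ℝ) * ∑ i, ∫ z', f g (z' i) ∂ν := by
        congr 1
        exact integral_finset_sum _ fun i _ =>
          integrable_of_abs_le
            (((hmeas g).comp (measurable_pi_apply i)).aestronglyMeasurable)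
            (fun z' => hf1 g (z' i))
    _ = (1 / N : ℝ) * ((N : ℝ) * expLoss μ f g) := by
        simp [heval, Finset.sum_const, mul_comm]
    _ = expLoss μ f g := by field_simp
  have hint_emp : ∀ g, Integrable (empLoss f N g) ν := fun g =>
    integrable_of_abs_le (hEmp_meas g).aestronglyMeasurable (hEmp_bd g)
  -- Step 1 (pointwise)
  have key1 : ∀ z, (⨆ g : ι, expLoss μ f g - empLoss f N g z)
      ≤ ∫ z', Φ (z, z') ∂ν := by
    intro z
    refine ciSup_le fun g => ?_
    have h0 : expLoss μ f g - empLoss f N g z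
        = ∫ z', (empLoss f N g z' - empLoss f N g z) ∂ν := by
      rw [integral_sub (hint_emp g) (integrable_const _), integral_const,
        probReal_univ, one_smul, hemp_int g]
    rw [h0]
    refine integral_mono ((hint_emp g).sub (integrable_const _))
      (integrable_of_abs_le ((hΦmeas.comp measurable_prodMk_left).aestronglyMeasurable)
        (fun z' => hΦbd (z, z'))) fun z' => ?_
    exact le_ciSup (bddAbove_of_abs_le fun g' => hΦterm_bd z z' g') g
  -- Step 1 (integrated)
  have stepA : (∫ z, (⨆ g : ι, expLoss μ f g - empLoss f N g z) ∂ν)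
      ≤ ∫ zz, Φ zz ∂(ν.prod ν) := by
    rw [integral_prod _ hΦint]
    refine integral_mono
      (integrable_of_abs_le
        (Measurable.iSup fun g => measurable_const.sub (hEmp_meas g)).aestronglyMeasurable
        (fun z => abs_ciSup_le (c := 2) fun g => by
          obtain ⟨h1a, h1b⟩ := abs_le.1 (hExp_bd g)
          obtain ⟨h2a, h2b⟩ := abs_le.1 (hEmp_bd g z)
          rw [abs_le]; constructor <;> [linarith; linarith]))
      hΦint.integral_prod_left key1
  -- Step 2 : symmetrization via sign-dependent swap
  have he : MeasurePreserving (MeasurableEquiv.arrowProdEquivProdArrow Z Z (Fin N))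
      (Measure.pi fun _ : Fin N => μ.prod μ) (ν.prod ν) :=
    measurePreserving_arrowProdEquivProdArrow Z Z (Fin N) (fun _ => μ) (fun _ => μ)
  have hH_int_eq : ∀ ξ : Fin N → Bool,
      ∫ zz, H (ξ, zz) ∂(ν.prod ν) = ∫ zz, Φ zz ∂(ν.prod ν) := by
    intro ξ
    set e := MeasurableEquiv.arrowProdEquivProdArrow Z Z (Fin N) with hedef
    have hswap : MeasurePreserving
        (fun w : Fin N → Z × Z => fun i => if ξ i then w i else Prod.swap (w i))
        (Measure.pi fun _ : Fin N => μ.prod μ)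
        (Measure.pi fun _ : Fin N => μ.prod μ) := by
      refine measurePreserving_piMap
        (φ := fun i x => if ξ i then x else Prod.swap x) fun i => ?_
      cases hξ : ξ i
      · simpa [hξ] using (Measure.measurePreserving_swap (μ := μ) (ν := μ))
      · convert MeasurePreserving.id (μ.prod μ) using 1; funext x; simp [hξ]
    have hT : MeasurePreserving
        (fun zz : (Fin N → Z) × (Fin N → Z) =>
          e (fun i => if ξ i then e.symm zz i else Prod.swap (e.symm zz i)))
        (ν.prod ν) (ν.prod ν) :=
      he.comp (hswap.comp (MeasurePreserving.symm e he))
    have hTeq : (fun zz : (Fin N → Z) × (Fin N → Z) =>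
          e (fun i => if ξ i then e.symm zz i else Prod.swap (e.symm zz i)))
        = fun zz => (fun i => if ξ i then zz.1 i else zz.2 i,
            fun i => if ξ i then zz.2 i else zz.1 i) := by
      funext zz
      refine Prod.ext ?_ ?_ <;> funext i <;>
        simp only [hedef, MeasurableEquiv.arrowProdEquivProdArrow,
          Equiv.arrowProdEquivProdArrow, MeasurableEquiv.coe_mk, Equiv.coe_fn_mk,
          Equiv.coe_fn_symm_mk, apply_ite Prod.fst, apply_ite Prod.snd, Prod.fst_swap,
          Prod.snd_swap] <;> split <;> rfl
    rw [hTeq] at hT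
    have hcomp : ∀ zz : (Fin N → Z) × (Fin N → Z),
        H (ξ, zz) = Φ (fun i => if ξ i then zz.1 i else zz.2 i,
          fun i => if ξ i then zz.2 i else zz.1 i) := by
      intro zz
      rw [hHdef, hΦdef]
      refine iSup_congr fun g => ?_
      show (1 / N : ℝ) * ∑ i, rsign (ξ i) * (f g (zz.2 i) - f g (zz.1 i))
        = empLoss f N g (fun i => if ξ i then zz.2 i else zz.1 i)
          - empLoss f N g (fun i => if ξ i then zz.1 i else zz.2 i)
      rw [empLoss, empLoss, ← mul_sub, ← Finset.sum_sub_distrib]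
      congr 1
      refine Finset.sum_congr rfl fun i _ => ?_
      cases hξ : ξ i <;> simp [rsign] <;> ring
    calc ∫ zz, H (ξ, zz) ∂(ν.prod ν)
        = ∫ zz, Φ (fun i => if ξ i then zz.1 i else zz.2 i,
            fun i => if ξ i then zz.2 i else zz.1 i) ∂(ν.prod ν) :=
          integral_congr_ae (Filter.Eventually.of_forall fun zz => hcomp zz)
    _ = ∫ zz, Φ zz ∂(ν.prod ν) := by
        conv_rhs => rw [← hT.map_eq]
        rw [integral_map hT.measurable.aemeasurable hΦmeas.aestronglyMeasurable]
  have stepB : ∫ zz, Φ zz ∂(ν.prod ν) = ∫ q, H q ∂(B.prod (ν.prod ν)) := by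
    rw [integral_prod _ hHint]
    symm
    calc ∫ ξ, ∫ zz, H (ξ, zz) ∂(ν.prod ν) ∂B
        = ∫ _ξ, (∫ zz, Φ zz ∂(ν.prod ν)) ∂B :=
          integral_congr_ae (Filter.Eventually.of_forall fun ξ => hH_int_eq ξ)
    _ = ∫ zz, Φ zz ∂(ν.prod ν) := by simp
  -- Step 3 : split the sup
  have hint1 : Integrable (fun q : (Fin N → Bool) × ((Fin N → Z) × (Fin N → Z)) =>
      G (q.2.2, q.1)) (B.prod (ν.prod ν)) :=
    integrable_of_abs_le
      ((hGmeas.comp ((measurable_snd.comp measurable_snd).prodMk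
        measurable_fst)).aestronglyMeasurable) (fun q => hGbd _)
  have hint2 : Integrable (fun q : (Fin N → Bool) × ((Fin N → Z) × (Fin N → Z)) =>
      G (q.2.1, fun i => !(q.1 i))) (B.prod (ν.prod ν)) :=
    integrable_of_abs_le
      ((hGmeas.comp ((measurable_fst.comp measurable_snd).prodMk
        (measurable_pi_lambda _ fun i =>
          (measurable_of_countable Bool.not).comp
            ((measurable_pi_apply i).comp measurable_fst)))).aestronglyMeasurable)
      (fun q => hGbd _)
  have stepC : ∫ q, H q ∂(B.prod (ν.prod ν))
      ≤ ∫ q, (G (q.2.2, q.1) + G (q.2.1, fun i => !(q.1 i))) ∂(B.prod (ν.prod ν)) := by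
    refine integral_mono hHint (hint1.add hint2) fun q => ?_
    refine ciSup_le fun g => ?_
    have hsplit : (1 / N : ℝ) * ∑ i, rsign (q.1 i) * (f g (q.2.2 i) - f g (q.2.1 i))
        = ((1 / N : ℝ) * ∑ i, rsign (q.1 i) * f g (q.2.2 i))
          + ((1 / N : ℝ) * ∑ i, rsign (!(q.1 i)) * f g (q.2.1 i)) := by
      simp only [rsign_not]
      rw [← mul_add, ← Finset.sum_add_distrib]
      congr 1
      exact Finset.sum_congr rfl fun i _ => by ring
    rw [hsplit]
    exact add_le_add
      (le_ciSup (bddAbove_of_abs_le fun g' => hGterm_bd (q.2.2, q.1) g') g)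
      (le_ciSup (bddAbove_of_abs_le fun g' =>
        hGterm_bd (q.2.1, fun i => !(q.1 i)) g') g)
  -- the two pieces each equal the Rademacher complexity
  have hfstmp : MeasurePreserving (Prod.fst : (Fin N → Z) × (Fin N → Z) → _)
      (ν.prod ν) ν :=
    ⟨measurable_fst, by rw [Measure.map_fst_prod]; simp⟩
  have hsndmp : MeasurePreserving (Prod.snd : (Fin N → Z) × (Fin N → Z) → _)
      (ν.prod ν) ν :=
    ⟨measurable_snd, by rw [Measure.map_snd_prod]; simp⟩
  have hnotmp : MeasurePreserving (fun ξ : Fin N → Bool => fun i => !(ξ i)) B B :=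
    measurePreserving_piMap fun _ => ⟨measurable_of_countable _, coinFlip_map_not⟩
  have hφ1 : MeasurePreserving
      (fun q : (Fin N → Bool) × ((Fin N → Z) × (Fin N → Z)) => (q.2.2, q.1))
      (B.prod (ν.prod ν)) (ν.prod B) :=
    Measure.measurePreserving_swap.comp ((MeasurePreserving.id B).prod hsndmp)
  have hφ2 : MeasurePreserving
      (fun q : (Fin N → Bool) × ((Fin N → Z) × (Fin N → Z)) =>
        (q.2.1, fun i => !(q.1 i)))
      (B.prod (ν.prod ν)) (ν.prod B) :=
    Measure.measurePreserving_swap.comp (hnotmp.prod hfstmp)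
  have hrad : radComplexity μ f N = ∫ p, G p ∂(ν.prod B) := rfl
  have hpiece1 : ∫ q, G (q.2.2, q.1) ∂(B.prod (ν.prod ν)) = radComplexity μ f N := by
    rw [hrad]
    conv_rhs => rw [← hφ1.map_eq]
    rw [integral_map hφ1.measurable.aemeasurable hGmeas.aestronglyMeasurable]
  have hpiece2 : ∫ q, G (q.2.1, fun i => !(q.1 i)) ∂(B.prod (ν.prod ν))
      = radComplexity μ f N := by
    rw [hrad]
    conv_rhs => rw [← hφ2.map_eq]
    rw [integral_map hφ2.measurable.aemeasurable hGmeas.aestronglyMeasurable]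
  calc (∫ z, (⨆ g : ι, expLoss μ f g - empLoss f N g z) ∂ν)
      ≤ ∫ zz, Φ zz ∂(ν.prod ν) := stepA
  _ = ∫ q, H q ∂(B.prod (ν.prod ν)) := stepB
  _ ≤ ∫ q, (G (q.2.2, q.1) + G (q.2.1, fun i => !(q.1 i)))
        ∂(B.prod (ν.prod ν)) := stepC
  _ = (∫ q, G (q.2.2, q.1) ∂(B.prod (ν.prod ν)))
        + ∫ q, G (q.2.1, fun i => !(q.1 i)) ∂(B.prod (ν.prod ν)) :=
      integral_add hint1 hint2
  _ = 2 * radComplexity μ f N := by rw [hpiece1, hpiece2]; ring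
end
end

section
/- High-probability bound on the uniform deviation: for i.i.d. samples z₁,…,z_N ∼ μ and any δ ∈ (0,1), with probability at least 1 − δ, sup_{g ∈ ι} ( L(g) − L_N(g)(z) ) ≤ E_{z' ∼ μ^{⊗N}}[ sup_{g ∈ ι} ( L(g) − L_N(g)(z') ) ] + √( log(1/δ) / (2N) ). -/
open MeasureTheory

noncomputable section

variable {Z : Type*} [MeasurableSpace Z] {ι : Type*}

lemma key_scalar_ineq {p : ℝ} (hp0 : 0 ≤ p) (hp1 : p ≤ 1) (t : ℝ) :
    1 - p + p * Real.exp t ≤ Real.exp (p * t + t ^ 2 / 8) := by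
  set D : ℝ → ℝ := fun t => 1 - p + p * Real.exp t with hD
  have hDpos : ∀ t, 0 < D t := by
    intro t
    rcases hp0.eq_or_lt with h | h
    · simp [hD, ← h]
    · have : 0 < p * Real.exp t := mul_pos h (Real.exp_pos t)
      have : (0:ℝ) ≤ 1 - p := by linarith
      simp only [hD]; nlinarith [Real.exp_pos t]
  set g : ℝ → ℝ := fun t => p * t + t ^ 2 / 8 - Real.log (D t) with hg
  set g' : ℝ → ℝ := fun t => p + t / 4 - p * Real.exp t / D t with hg'
  have hDder : ∀ t, HasDerivAt D (p * Real.exp t) t := by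
    intro t
    exact ((Real.hasDerivAt_exp t).const_mul p).const_add (1 - p)
  have hgder : ∀ t, HasDerivAt g (g' t) t := by
    intro t
    have h1 : HasDerivAt (fun t : ℝ => p * t) p t := by
      simpa using (hasDerivAt_id t).const_mul p
    have h2 : HasDerivAt (fun t : ℝ => t ^ 2 / 8) (t / 4) t := by
      have := (hasDerivAt_pow 2 t).div_const 8
      exact this.congr_deriv (by rw [show (2:ℕ) - 1 = 1 from rfl]; push_cast; ring)
    have h3 : HasDerivAt (fun t : ℝ => Real.log (D t)) (p * Real.exp t / D t) t :=
      (hDder t).log (hDpos t).ne'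
    exact (h1.add h2).sub h3
  have hg'der : ∀ t, HasDerivAt g'
      (1 / 4 - p * Real.exp t * (1 - p) / (D t) ^ 2) t := by
    intro t
    have h1 : HasDerivAt (fun t : ℝ => p + t / 4) (1 / 4) t := by
      simpa using ((hasDerivAt_id t).div_const 4).const_add p
    have h2 : HasDerivAt (fun t : ℝ => p * Real.exp t / D t)
        ((p * Real.exp t * D t - p * Real.exp t * (p * Real.exp t)) / (D t) ^ 2) t :=
      ((Real.hasDerivAt_exp t).const_mul p).div (hDder t) (hDpos t).ne'
    have : (p * Real.exp t * D t - p * Real.exp t * (p * Real.exp t)) / (D t) ^ 2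
        = p * Real.exp t * (1 - p) / (D t) ^ 2 := by
      rw [hD]; ring_nf
    rw [this] at h2
    exact h1.sub h2
  have hg''nonneg : ∀ t, 0 ≤ 1 / 4 - p * Real.exp t * (1 - p) / (D t) ^ 2 := by
    intro t
    rw [sub_nonneg, div_le_iff₀ (pow_pos (hDpos t) 2)]
    have h := sq_nonneg ((1 - p) - p * Real.exp t)
    simp only [hD]
    nlinarith [Real.exp_pos t]
  have hg'mono : Monotone g' :=
    monotone_of_deriv_nonneg (fun t => (hg'der t).differentiableAt)
      (fun t => by rw [(hg'der t).deriv]; exact hg''nonneg t)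
  have hg'0 : g' 0 = 0 := by simp [hg', hD]
  have hgdiff : Differentiable ℝ g := fun t => (hgder t).differentiableAt
  have hg0 : g 0 = 0 := by simp [hg, hD]
  have hgnonneg : ∀ t, 0 ≤ g t := by
    intro t
    rcases le_or_gt 0 t with h | h
    · have : MonotoneOn g (Set.Ici 0) := by
        apply monotoneOn_of_deriv_nonneg (convex_Ici 0) hgdiff.continuous.continuousOn
          (hgdiff.differentiableOn)
        intro x hx
        rw [(hgder x).deriv]
        rw [interior_Ici] at hx
        have : (0:ℝ) ≤ g' x := hg'0 ▸ hg'mono (le_of_lt hx)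
        exact this
      have := this (Set.self_mem_Ici) (Set.mem_Ici.mpr h) h
      rwa [hg0] at this
    · have : AntitoneOn g (Set.Iic 0) := by
        apply antitoneOn_of_deriv_nonpos (convex_Iic 0) hgdiff.continuous.continuousOn
          (hgdiff.differentiableOn)
        intro x hx
        rw [(hgder x).deriv]
        rw [interior_Iic] at hx
        have : g' x ≤ 0 := hg'0 ▸ hg'mono (le_of_lt hx)
        exact this
      have := this (Set.mem_Iic.mpr h.le) (Set.self_mem_Iic) h.le
      rwa [hg0] at this
    
  have hlog : Real.log (D t) ≤ p * t + t ^ 2 / 8 := by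
    have := hgnonneg t; simp only [hg] at this; linarith
  calc 1 - p + p * Real.exp t = Real.exp (Real.log (D t)) := by
        rw [Real.exp_log (hDpos t)]
    _ ≤ Real.exp (p * t + t ^ 2 / 8) := Real.exp_le_exp.mpr hlog

lemma integrable_of_bdd {α} [MeasurableSpace α] {ν : Measure α} [IsFiniteMeasure ν]
    {f : α → ℝ} (hf : Measurable f) {C : ℝ} (h : ∀ x, |f x| ≤ C) : Integrable f ν :=
  Integrable.mono' (integrable_const C) hf.aestronglyMeasurable
    (Filter.Eventually.of_forall fun x => by simpa using h x)

lemma hoeffding_icc {α} [MeasurableSpace α] (ν : Measure α) [IsProbabilityMeasure ν]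
    {h : α → ℝ} (hm : Measurable h) {a b : ℝ} (hab : ∀ x, h x ∈ Set.Icc a b)
    (hmean : ∫ x, h x ∂ν = 0) (s : ℝ) :
    ∫ x, Real.exp (s * h x) ∂ν ≤ Real.exp (s ^ 2 * (b - a) ^ 2 / 8) := by
  have hne : Nonempty α := by
    by_contra hemp
    rw [not_nonempty_iff] at hemp
    have : ν Set.univ = 0 := by simp [Set.univ_eq_empty_iff.mpr hemp]
    simp [measure_univ] at this
  obtain ⟨x₀⟩ := hne
  have hint : Integrable h ν :=
    integrable_of_bdd hm (C := max |a| |b|) (fun x => abs_le.mpr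
      ⟨le_trans (neg_le_neg (le_max_left |a| |b|)) (by
          have := (hab x).1; have := neg_abs_le a; linarith),
       le_trans (hab x).2 (le_trans (le_abs_self b) (le_max_right _ _))⟩)
  have ha0 : a ≤ 0 := by
    have : a = ∫ _, a ∂ν := by simp
    rw [← hmean, this]
    exact integral_mono (integrable_const a) hint fun x => (hab x).1
  have hb0 : 0 ≤ b := by
    have : b = ∫ _, b ∂ν := by simp
    rw [← hmean, this]
    exact integral_mono hint (integrable_const b) fun x => (hab x).2
  rcases eq_or_lt_of_le (ha0.trans hb0) with hba | hba
  · -- a = b = 0, h ≡ 0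
    have ha : a = 0 := le_antisymm ha0 (by rw [hba]; exact hb0)
    have hb : b = 0 := by rw [← hba, ha]
    have hz : ∀ x, h x = 0 := fun x =>
      le_antisymm (hb ▸ (hab x).2) (ha ▸ (hab x).1)
    simp only [hz, mul_zero, Real.exp_zero, integral_const, measure_univ,
      ENNReal.toReal_one, probReal_univ, smul_eq_mul, one_mul, mul_one]
    exact Real.one_le_exp (by positivity)
  · -- main case a < b
    set p : ℝ := -a / (b - a) with hp
    have hba' : 0 < b - a := by linarith
    have hp0 : 0 ≤ p := div_nonneg (by linarith) hba'.le
    have hp1 : p ≤ 1 := by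
      rw [div_le_one hba']; linarith
    -- pointwise convexity bound
    have hpt : ∀ x, Real.exp (s * h x) ≤
        (b * Real.exp (s * a) - a * Real.exp (s * b)) / (b - a)
          + h x * ((Real.exp (s * b) - Real.exp (s * a)) / (b - a)) := by
      intro x
      have hx1 := (hab x).1
      have hx2 := (hab x).2
      set θ : ℝ := (b - h x) / (b - a) with hθ
      have hθ0 : 0 ≤ θ := div_nonneg (by linarith) hba'.le
      have hθ1 : 1 - θ = (h x - a) / (b - a) := by
        rw [hθ, eq_div_iff hba'.ne']; field_simp; ring
      have hθ1' : 0 ≤ 1 - θ := by rw [hθ1]; exact div_nonneg (by linarith) hba'.le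
      have hcvx := convexOn_exp.2 (Set.mem_univ (s * a)) (Set.mem_univ (s * b))
        hθ0 hθ1' (by ring)
      have harg : θ • (s * a) + (1 - θ) • (s * b) = s * h x := by
        simp only [smul_eq_mul, hθ1, hθ]
        field_simp
        ring
      rw [harg] at hcvx
      refine le_of_le_of_eq hcvx ?_
      simp only [smul_eq_mul, hθ1, hθ]
      field_simp
      ring
    -- integrate
    have hintexp : Integrable (fun x => Real.exp (s * h x)) ν := by
      apply integrable_of_bdd (hm.const_mul s).exp (C := Real.exp (|s| * max |a| |b|))
      intro x
      rw [abs_of_pos (Real.exp_pos _), Real.exp_le_exp]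
      calc s * h x ≤ |s * h x| := le_abs_self _
        _ = |s| * |h x| := abs_mul s (h x)
        _ ≤ |s| * max |a| |b| := by
            apply mul_le_mul_of_nonneg_left _ (abs_nonneg s)
            rcases abs_le.mp (le_refl |h x|) with _
            rcases le_total 0 (h x) with hx | hx
            · rw [abs_of_nonneg hx]
              exact le_trans (hab x).2 (le_trans (le_abs_self b) (le_max_right _ _))
            · rw [abs_of_nonpos hx]
              have := (hab x).1
              exact le_trans (by linarith [neg_abs_le a]) (le_max_left |a| |b|)
    have hrhsint : Integrable (fun x =>
        (b * Real.exp (s * a) - a * Real.exp (s * b)) / (b - a)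
          + h x * ((Real.exp (s * b) - Real.exp (s * a)) / (b - a))) ν :=
      (integrable_const _).add (hint.mul_const _)
    have hstep := integral_mono hintexp hrhsint hpt
    rw [integral_add (integrable_const _) (hint.mul_const _), integral_const,
      integral_mul_const, hmean] at hstep
    simp only [measure_univ, ENNReal.toReal_one, probReal_univ, smul_eq_mul, one_mul, zero_mul,
      add_zero] at hstep
    refine le_trans hstep ?_
    -- scalar step
    have key := key_scalar_ineq hp0 hp1 (s * (b - a))
    have hpa : p * (b - a) = -a := by rw [hp]; field_simp
    have e1 : s * a = -(p * (s * (b - a))) := by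
      rw [show -(p * (s * (b - a))) = s * -(p * (b - a)) by ring, hpa]; ring
    have hv : Real.exp (s * b) = Real.exp (s * a) * Real.exp (s * (b - a)) := by
      rw [← Real.exp_add]; ring_nf
    have lhs_eq : (b * Real.exp (s * a) - a * Real.exp (s * b)) / (b - a)
        = Real.exp (-(p * (s * (b - a)))) * (1 - p + p * Real.exp (s * (b - a))) := by
      rw [div_eq_iff hba'.ne', ← e1, hv]
      linear_combination (Real.exp (s * a) - Real.exp (s * a) * Real.exp (s * (b - a))) * hpa
    rw [lhs_eq]
    calc Real.exp (-(p * (s * (b-a)))) * (1 - p + p * Real.exp (s * (b - a)))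
        ≤ Real.exp (-(p * (s * (b-a)))) *
            Real.exp (p * (s * (b-a)) + (s * (b-a)) ^ 2 / 8) :=
          mul_le_mul_of_nonneg_left key (Real.exp_pos _).le
      _ = Real.exp ((s * (b-a)) ^ 2 / 8) := by rw [← Real.exp_add]; ring_nf
      _ = Real.exp (s ^ 2 * (b - a) ^ 2 / 8) := by ring_nf

lemma hoeffding_osc {α} [MeasurableSpace α] (ν : Measure α) [IsProbabilityMeasure ν]
    {h : α → ℝ} (hm : Measurable h) {C c : ℝ} (hb : ∀ x, |h x| ≤ C)
    (hosc : ∀ x y, h x - h y ≤ c) (s : ℝ) :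
    ∫ x, Real.exp (s * (h x - ∫ y, h y ∂ν)) ∂ν ≤ Real.exp (s ^ 2 * c ^ 2 / 8) := by
  have hne : Nonempty α := by
    by_contra hemp
    rw [not_nonempty_iff] at hemp
    have : ν Set.univ = 0 := by simp [Set.univ_eq_empty_iff.mpr hemp]
    simp [measure_univ] at this
  obtain ⟨x₀⟩ := hne
  set m : ℝ := ∫ y, h y ∂ν with hmdef
  have hint : Integrable h ν := integrable_of_bdd hm hb
  have hbdd : BddBelow (Set.range h) := ⟨-C, by
    rintro - ⟨x, rfl⟩; linarith [(abs_le.mp (hb x)).1]⟩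
  set a : ℝ := sInf (Set.range h) - m with ha
  have hlow : ∀ x, a ≤ h x - m := fun x =>
    sub_le_sub_right (csInf_le hbdd (Set.mem_range_self x)) m
  have hhigh : ∀ x, h x - m ≤ a + c := by
    intro x
    have : h x - c ≤ sInf (Set.range h) := by
      apply le_csInf (⟨h x₀, x₀, rfl⟩ : (Set.range h).Nonempty)
      rintro - ⟨y, rfl⟩
      linarith [hosc x y]
    simp only [ha]; linarith
  have hmean : ∫ x, (h x - m) ∂ν = 0 := by
    rw [integral_sub hint (integrable_const m)]
    simp [hmdef]
  have := hoeffding_icc ν (a := a) (b := a + c) (hm.sub measurable_const)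
    (fun x => ⟨hlow x, hhigh x⟩) hmean s
  simpa using this

lemma mcdiarmid_mgf {W : Type*} [MeasurableSpace W] (μ : Measure W) [IsProbabilityMeasure μ]
    (c : ℝ) (s : ℝ) :
    ∀ (N : ℕ) (F : (Fin N → W) → ℝ), Measurable F → ∀ (C : ℝ), (∀ z, |F z| ≤ C) →
    (∀ (i : Fin N) (z z' : Fin N → W), (∀ j, j ≠ i → z j = z' j) → F z - F z' ≤ c) →
    ∫ z, Real.exp (s * (F z - ∫ z', F z' ∂(Measure.pi fun _ : Fin N => μ)))
        ∂(Measure.pi fun _ : Fin N => μ)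
      ≤ Real.exp (s ^ 2 * N * c ^ 2 / 8) := by
  intro N
  induction N with
  | zero =>
    intro F hF C hFb hdiff
    have hFc : F = fun _ => F default := funext fun z => by rw [Subsingleton.elim z default]
    rw [hFc]
    simp
  | succ n ih =>
    intro F hF C hFb hdiff
    have hZ : Nonempty W := by
      by_contra hemp
      rw [not_nonempty_iff] at hemp
      have : μ Set.univ = 0 := by simp [Set.univ_eq_empty_iff.mpr hemp]
      simp [measure_univ] at this
    obtain ⟨z₀⟩ := hZ
    have hc0 : 0 ≤ c := by
      have := hdiff 0 (fun _ => z₀) (fun _ => z₀) (fun _ _ => rfl)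
      simpa using this
    set Pm : Measure (Fin n → W) := Measure.pi fun _ => μ with hPm
    set Pms : Measure (Fin (n + 1) → W) := Measure.pi fun _ => μ with hPms
    set e := MeasurableEquiv.piFinSuccAbove (fun _ : Fin (n + 1) => W) 0 with he
    have hmp : MeasurePreserving e.symm (μ.prod Pm) Pms :=
      (measurePreserving_piFinSuccAbove (fun _ : Fin (n + 1) => μ) 0).symm
    have hcons : ∀ p : W × (Fin n → W), e.symm p = Fin.cons p.1 p.2 := by
      intro p
      simp [he, MeasurableEquiv.piFinSuccAbove, Fin.insertNth_zero', Fin.consEquiv]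
    -- integral transfer
    have hInt : ∀ φ : (Fin (n + 1) → W) → ℝ, Measurable φ → (∃ D, ∀ z, |φ z| ≤ D) →
        ∫ z, φ z ∂Pms = ∫ w, ∫ x, φ (Fin.cons x w) ∂μ ∂Pm := by
      intro φ hφ ⟨D, hD⟩
      rw [← hmp.integral_comp' φ]
      have h1 : Integrable (fun p => φ (e.symm p)) (μ.prod Pm) :=
        integrable_of_bdd (hφ.comp e.symm.measurable) (fun p => hD _)
      rw [MeasureTheory.integral_prod_symm _ h1]
      congr 1; funext w; congr 1; funext x
      rw [hcons]
    have hconsmeas : ∀ w : Fin n → W, Measurable (fun x : W => F (Fin.cons x w)) := by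
      intro w
      have : (fun x : W => F (Fin.cons x w)) = fun x => F (e.symm (x, w)) :=
        funext fun x => by rw [hcons]
      rw [this]
      exact hF.comp (e.symm.measurable.comp (measurable_id.prodMk measurable_const))
    set G : (Fin n → W) → ℝ := fun w => ∫ x, F (Fin.cons x w) ∂μ with hG
    have hF2meas : Measurable (fun p : W × (Fin n → W) => F (Fin.cons p.1 p.2)) := by
      have : (fun p : W × (Fin n → W) => F (Fin.cons p.1 p.2)) = fun p => F (e.symm p) :=
        funext fun p => by rw [hcons]
      rw [this]; exact hF.comp e.symm.measurable
    have hGmeas : Measurable G :=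
      hF2meas.stronglyMeasurable.integral_prod_left'.measurable
    have hGb : ∀ w, |G w| ≤ C := by
      intro w
      have : ‖∫ x, F (Fin.cons x w) ∂μ‖ ≤ C * (μ Set.univ).toReal :=
        norm_integral_le_of_norm_le_const (Filter.Eventually.of_forall fun x => by
          simpa using hFb (Fin.cons x w))
      simpa [measure_univ] using this
    -- agreement off a coordinate for cons tuples
    have hagree0 : ∀ (x y : W) (w : Fin n → W) (j : Fin (n + 1)), j ≠ 0 →
        (Fin.cons x w : Fin (n + 1) → W) j = (Fin.cons y w : Fin (n + 1) → W) j := by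
      intro x y w j hj
      obtain ⟨k, rfl⟩ := Fin.exists_succ_eq.mpr hj
      simp
    have hGdiff : ∀ (i : Fin n) (w w' : Fin n → W), (∀ j, j ≠ i → w j = w' j) →
        G w - G w' ≤ c := by
      intro i w w' hww
      have hptwise : ∀ x, F (Fin.cons x w) - F (Fin.cons x w') ≤ c := by
        intro x
        apply hdiff i.succ
        intro j hj
        induction j using Fin.cases with
        | zero => simp
        | succ k =>
          simp only [Fin.cons_succ]
          exact hww k (fun hk => hj (by rw [hk]))
      have h1 : Integrable (fun x => F (Fin.cons x w)) μ :=
        integrable_of_bdd (hconsmeas w) (fun x => hFb _)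
      have h2 : Integrable (fun x => F (Fin.cons x w')) μ :=
        integrable_of_bdd (hconsmeas w') (fun x => hFb _)
      rw [hG]
      simp only
      rw [← integral_sub h1 h2]
      calc ∫ x, (F (Fin.cons x w) - F (Fin.cons x w')) ∂μ
          ≤ ∫ _, c ∂μ := integral_mono (h1.sub h2) (integrable_const c) hptwise
        _ = c := by simp [measure_univ]
    set m : ℝ := ∫ z, F z ∂Pms with hm
    have hm_eq : m = ∫ w, G w ∂Pm := hInt F hF ⟨C, hFb⟩
    have hDbd : ∀ z, |Real.exp (s * (F z - m))| ≤ Real.exp (|s| * (C + |m|)) := by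
      intro z
      rw [abs_of_pos (Real.exp_pos _), Real.exp_le_exp]
      calc s * (F z - m) ≤ |s * (F z - m)| := le_abs_self _
        _ = |s| * |F z - m| := abs_mul _ _
        _ ≤ |s| * (C + |m|) := by
            apply mul_le_mul_of_nonneg_left _ (abs_nonneg s)
            calc |F z - m| ≤ |F z| + |m| := abs_sub _ _
              _ ≤ C + |m| := add_le_add_left (hFb z) _
    -- inner Hoeffding bound
    have hinner : ∀ w, ∫ x, Real.exp (s * (F (Fin.cons x w) - m)) ∂μ
        ≤ Real.exp (s ^ 2 * c ^ 2 / 8) * Real.exp (s * (G w - m)) := by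
      intro w
      have hsplit : ∀ x, Real.exp (s * (F (Fin.cons x w) - m))
          = Real.exp (s * (F (Fin.cons x w) - G w)) * Real.exp (s * (G w - m)) := by
        intro x; rw [← Real.exp_add]; ring_nf
      simp_rw [hsplit]
      rw [integral_mul_const]
      apply mul_le_mul_of_nonneg_right _ (Real.exp_pos _).le
      have hosc : ∀ x y : W, F (Fin.cons x w) - F (Fin.cons y w) ≤ c := by
        intro x y
        exact hdiff 0 _ _ (fun j hj => hagree0 x y w j hj)
      exact hoeffding_osc μ (hconsmeas w) (fun x => hFb _) hosc s
    -- outer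
    have houter : ∫ z, Real.exp (s * (F z - m)) ∂Pms
        = ∫ w, ∫ x, Real.exp (s * (F (Fin.cons x w) - m)) ∂μ ∂Pm :=
      hInt _ ((hF.sub measurable_const).const_mul s).exp ⟨_, hDbd⟩
    rw [houter]
    have hlhs_int : Integrable (fun w => ∫ x, Real.exp (s * (F (Fin.cons x w) - m)) ∂μ) Pm := by
      refine integrable_of_bdd
        (((hF2meas.sub measurable_const).const_mul s).exp).stronglyMeasurable.integral_prod_left'.measurable
        (C := Real.exp (|s| * (C + |m|))) ?_
      · intro w
        have h1 : ‖∫ x, Real.exp (s * (F (Fin.cons x w) - m)) ∂μ‖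
            ≤ Real.exp (|s| * (C + |m|)) * (μ Set.univ).toReal :=
          norm_integral_le_of_norm_le_const (Filter.Eventually.of_forall fun x => by
            simpa using hDbd (Fin.cons x w))
        simpa [Real.norm_eq_abs, measure_univ] using h1
    have hrhs_int : Integrable
        (fun w => Real.exp (s ^ 2 * c ^ 2 / 8) * Real.exp (s * (G w - m))) Pm := by
      refine integrable_of_bdd ((((hGmeas.sub measurable_const).const_mul s).exp).const_mul _)
        (C := Real.exp (s ^ 2 * c ^ 2 / 8) * Real.exp (|s| * (C + |m|))) ?_
      · intro w
        rw [abs_of_pos (mul_pos (Real.exp_pos _) (Real.exp_pos _))]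
        apply mul_le_mul_of_nonneg_left _ (Real.exp_pos _).le
        rw [Real.exp_le_exp]
        calc s * (G w - m) ≤ |s * (G w - m)| := le_abs_self _
          _ = |s| * |G w - m| := abs_mul _ _
          _ ≤ |s| * (C + |m|) := by
              apply mul_le_mul_of_nonneg_left _ (abs_nonneg s)
              calc |G w - m| ≤ |G w| + |m| := abs_sub _ _
                _ ≤ C + |m| := add_le_add_left (hGb w) _
    calc ∫ w, ∫ x, Real.exp (s * (F (Fin.cons x w) - m)) ∂μ ∂Pm
        ≤ ∫ w, Real.exp (s ^ 2 * c ^ 2 / 8) * Real.exp (s * (G w - m)) ∂Pm :=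
          integral_mono hlhs_int hrhs_int hinner
      _ = Real.exp (s ^ 2 * c ^ 2 / 8) * ∫ w, Real.exp (s * (G w - m)) ∂Pm := by
          rw [integral_const_mul]
      _ ≤ Real.exp (s ^ 2 * c ^ 2 / 8) * Real.exp (s ^ 2 * n * c ^ 2 / 8) := by
          apply mul_le_mul_of_nonneg_left _ (Real.exp_pos _).le
          have := ih G hGmeas C hGb hGdiff
          rwa [← hm_eq] at this
      _ = Real.exp (s ^ 2 * (n + 1 : ℕ) * c ^ 2 / 8) := by
          rw [← Real.exp_add]; congr 1; push_cast; ring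

/-- **High-probability bound on the uniform deviation**: for i.i.d. samples `z ~ μ^{⊗N}` and
`δ ∈ (0,1)`, with probability at least `1 - δ`,
`sup_{g ∈ ι} (L(g) - L_N(g)(z)) ≤ E_{z'} [sup_{g ∈ ι} (L(g) - L_N(g)(z'))] + √(log(1/δ)/(2N))`. -/
theorem uniform_deviation_high_probability
    (μ : Measure Z) [IsProbabilityMeasure μ] [Countable ι] [Nonempty ι]
    (f : ι → Z → ℝ) (hmeas : ∀ g, Measurable (f g))
    (hbound : ∀ g x, f g x ∈ Set.Icc (0 : ℝ) 1)
    (N : ℕ) (hN : 0 < N) (δ : ℝ) (hδ : δ ∈ Set.Ioo (0 : ℝ) 1) :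
    (Measure.pi fun _ : Fin N => μ)
      {z | (⨆ g : ι, expLoss μ f g - empLoss f N g z) ≤
        (∫ z', (⨆ g : ι, expLoss μ f g - empLoss f N g z')
            ∂(Measure.pi fun _ : Fin N => μ)) +
          Real.sqrt (Real.log (1 / δ) / (2 * N))}
      ≥ ENNReal.ofReal (1 - δ) := by
  obtain ⟨hδ0, hδ1⟩ := hδ
  have hNR : (0 : ℝ) < N := Nat.cast_pos.mpr hN
  set Pm : Measure (Fin N → Z) := Measure.pi fun _ => μ with hPm
  set F : (Fin N → Z) → ℝ := fun z => ⨆ g : ι, expLoss μ f g - empLoss f N g z with hF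
  -- basic bounds
  have hLb : ∀ g, expLoss μ f g ∈ Set.Icc (0:ℝ) 1 := by
    intro g
    constructor
    · exact integral_nonneg fun x => (hbound g x).1
    · calc ∫ x, f g x ∂μ ≤ ∫ _, (1:ℝ) ∂μ := by
            apply integral_mono _ (integrable_const 1) fun x => (hbound g x).2
            exact integrable_of_bdd (hmeas g) (C := 1) fun x => abs_le.mpr
              ⟨by linarith [(hbound g x).1], (hbound g x).2⟩
        _ = 1 := by simp [measure_univ]
  have hEb : ∀ g z, empLoss f N g z ∈ Set.Icc (0:ℝ) 1 := by
    intro g z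
    constructor
    · apply mul_nonneg (by positivity)
      exact Finset.sum_nonneg fun i _ => (hbound g (z i)).1
    · rw [empLoss]
      have hsum : ∑ i, f g (z i) ≤ (N : ℝ) := by
        calc ∑ i, f g (z i) ≤ ∑ _i : Fin N, (1:ℝ) :=
              Finset.sum_le_sum fun i _ => (hbound g (z i)).2
          _ = N := by simp
      calc (1 / (N:ℝ)) * ∑ i, f g (z i) ≤ (1 / (N:ℝ)) * N := by
            apply mul_le_mul_of_nonneg_left hsum (by positivity)
        _ = 1 := by field_simp
  have hterm : ∀ g z, |expLoss μ f g - empLoss f N g z| ≤ 1 := fun g z => abs_le.mpr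
    ⟨by linarith [(hLb g).1, (hEb g z).2], by linarith [(hLb g).2, (hEb g z).1]⟩
  have hbdd : ∀ z, BddAbove (Set.range fun g => expLoss μ f g - empLoss f N g z) := by
    intro z
    exact ⟨1, by rintro - ⟨g, rfl⟩; exact (abs_le.mp (hterm g z)).2⟩
  have hFb : ∀ z, |F z| ≤ 1 := by
    intro z
    rw [abs_le]
    constructor
    · calc (-1 : ℝ) ≤ expLoss μ f (Classical.arbitrary ι)
            - empLoss f N (Classical.arbitrary ι) z := (abs_le.mp (hterm _ z)).1
        _ ≤ F z := le_ciSup (hbdd z) _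
    · exact ciSup_le fun g => (abs_le.mp (hterm g z)).2
  have hFmeas : Measurable F := by
    apply Measurable.iSup
    intro g
    apply Measurable.sub measurable_const
    apply Measurable.const_mul
    exact Finset.measurable_sum _ fun i _ => (hmeas g).comp (measurable_pi_apply i)
  have hFdiff : ∀ (i : Fin N) (z z' : Fin N → Z), (∀ j, j ≠ i → z j = z' j) →
      F z - F z' ≤ 1 / N := by
    intro i z z' hzz
    rw [sub_le_iff_le_add]
    apply ciSup_le
    intro g
    have hterm2 : expLoss μ f g - empLoss f N g z
        ≤ (expLoss μ f g - empLoss f N g z') + 1 / N := by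
      have hsumeq : ∑ j, f g (z' j) - ∑ j, f g (z j)
          = f g (z' i) - f g (z i) := by
        rw [← Finset.sum_sub_distrib]
        rw [Finset.sum_eq_single_of_mem i (Finset.mem_univ i)]
        intro j _ hj
        rw [hzz j hj, sub_self]
      have hd : f g (z' i) - f g (z i) ≤ 1 := by
        linarith [(hbound g (z' i)).2, (hbound g (z i)).1]
      have : empLoss f N g z' - empLoss f N g z ≤ 1 / N := by
        rw [empLoss, empLoss, ← mul_sub, hsumeq]
        calc (1 / (N:ℝ)) * (f g (z' i) - f g (z i)) ≤ (1 / (N:ℝ)) * 1 :=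
              mul_le_mul_of_nonneg_left hd (by positivity)
          _ = 1 / N := mul_one _
      linarith
    calc expLoss μ f g - empLoss f N g z
        ≤ (expLoss μ f g - empLoss f N g z') + 1 / N := hterm2
      _ ≤ F z' + 1 / N := add_le_add_left (le_ciSup (hbdd z') g) _
      _ = 1 / N + F z' := add_comm _ _
  -- tail bound via mgf
  set m : ℝ := ∫ z, F z ∂Pm with hm
  set t : ℝ := Real.sqrt (Real.log (1 / δ) / (2 * N)) with ht
  have hlog0 : 0 ≤ Real.log (1 / δ) :=
    Real.log_nonneg (by rw [le_div_iff₀ hδ0]; linarith)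
  have ht0 : 0 ≤ t := Real.sqrt_nonneg _
  have ht2 : t ^ 2 = Real.log (1 / δ) / (2 * N) :=
    Real.sq_sqrt (div_nonneg hlog0 (by positivity))
  set s : ℝ := 4 * N * t with hs
  have hs0 : 0 ≤ s := by positivity
  have hintexp : Integrable (fun z => Real.exp (s * (F z - m))) Pm := by
    apply integrable_of_bdd ((hFmeas.sub measurable_const).const_mul s).exp
      (C := Real.exp (|s| * (1 + |m|)))
    intro z
    rw [abs_of_pos (Real.exp_pos _), Real.exp_le_exp]
    calc s * (F z - m) ≤ |s * (F z - m)| := le_abs_self _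
      _ = |s| * |F z - m| := abs_mul _ _
      _ ≤ |s| * (1 + |m|) := by
          apply mul_le_mul_of_nonneg_left _ (abs_nonneg s)
          calc |F z - m| ≤ |F z| + |m| := abs_sub _ _
            _ ≤ 1 + |m| := add_le_add_left (hFb z) _
  have hmgf : ProbabilityTheory.mgf (fun z => F z - m) Pm s
      ≤ Real.exp (s ^ 2 * N * (1 / N : ℝ) ^ 2 / 8) := by
    have := mcdiarmid_mgf μ (1 / N) s N F hFmeas 1 hFb hFdiff
    rw [ProbabilityTheory.mgf]
    exact this
  have htail := ProbabilityTheory.measure_ge_le_exp_mul_mgf (X := fun z => F z - m)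
    (μ := Pm) t hs0 hintexp
  have hexp_eq : Real.exp (-s * t) * Real.exp (s ^ 2 * N * (1 / N : ℝ) ^ 2 / 8) = δ := by
    rw [← Real.exp_add]
    have harg : -s * t + s ^ 2 * N * (1 / N : ℝ) ^ 2 / 8 = -(2 * N * t ^ 2) := by
      rw [hs]; field_simp; ring
    rw [harg, ht2]
    have : -(2 * (N:ℝ) * (Real.log (1 / δ) / (2 * N))) = Real.log δ := by
      rw [Real.log_div one_ne_zero (ne_of_gt hδ0), Real.log_one]
      field_simp; ring
    rw [this, Real.exp_log hδ0]
  have h1 : (Pm {z | t ≤ F z - m}).toReal ≤ δ := by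
    calc (Pm {z | t ≤ F z - m}).toReal
        ≤ Real.exp (-s * t) * ProbabilityTheory.mgf (fun z => F z - m) Pm s := htail
      _ ≤ Real.exp (-s * t) * Real.exp (s ^ 2 * N * (1 / N : ℝ) ^ 2 / 8) :=
          mul_le_mul_of_nonneg_left hmgf (Real.exp_pos _).le
      _ = δ := hexp_eq
  have h2 : Pm {z | t ≤ F z - m} ≤ ENNReal.ofReal δ := by
    rw [← ENNReal.ofReal_toReal (measure_ne_top Pm _)]
    exact ENNReal.ofReal_le_ofReal h1
  -- assemble
  set S : Set (Fin N → Z) := {z | F z ≤ m + t} with hS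
  have hSmeas : MeasurableSet S := measurableSet_le hFmeas measurable_const
  have hsub : Sᶜ ⊆ {z | t ≤ F z - m} := by
    intro z hz
    simp only [hS, Set.mem_compl_iff, Set.mem_setOf_eq, not_le] at hz
    simp only [Set.mem_setOf_eq]
    linarith
  have hcompl : Pm Sᶜ ≤ ENNReal.ofReal δ := le_trans (measure_mono hsub) h2
  have hgoal : ENNReal.ofReal (1 - δ) ≤ Pm S := by
    have := prob_compl_eq_one_sub (μ := Pm) hSmeas.compl
    rw [compl_compl] at this
    rw [this, ENNReal.ofReal_sub 1 hδ0.le, ENNReal.ofReal_one]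
    exact tsub_le_tsub_left hcompl 1
  exact hgoal
end
end
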